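/- Let H be a Hermitian matrix of signature (n,1) with entries in a number field E, and let g ∈ SU(H) be loxodromic with eigenvalue λ, |λ| > 1. If a field embedding τ: E → ℂ satisfies τ(Tr(g^m)) = Tr(g^m) for all m and the group SU(^τH) is compact, then a contradiction arises; hence no such τ other than identity or complex conjugation can fix the trace field of a group containing g and contained in SU(H, O_E) with (H, E/F) admissible. -/

import Mathlib

open Matrix Complex Filter

theorem no_trace_fixing_compact_embedding (n k : ℕ)
    (E : Subfield ℂ)
    -- H is Hermitian with entries in E, g ∈ SU(H) with entries in E
    (HE gE : Matrix (Fin (n+1)) (Fin (n+1)) E)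
    (H g : Matrix (Fin (n+1)) (Fin (n+1)) ℂ)
    (hH : H = HE.map (fun x => (x : ℂ))) (hg : g = gE.map (fun x => (x : ℂ)))
    (hHerm : Hᴴ = H)
    (hSU : gᴴ * H * g = H ∧ g.det = 1)
    -- g is loxodromic with leading eigenvalue lam, |lam| > 1
    (lam : ℂ) (hlam : 1 < ‖lam‖)
    (v : Fin (n+1) → ℂ) (hv : v ≠ 0) (heig : g.mulVec v = lam • v)
    (θ : Fin k → ℝ)
    (htr : ∀ m : ℕ, (g ^ m).trace
      = lam ^ m + ((starRingEnd ℂ) lam)⁻¹ ^ m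
        + ∑ j, Complex.exp ((m : ℂ) * θ j * I))
    -- τ is a field embedding of E fixing all the traces Tr(g^m)
    (τ : E →+* ℂ)
    (hτfix : ∀ m : ℕ, τ ((gE ^ m).trace) = (g ^ m).trace)
    -- applying τ entrywise sends g into SU(^τH) ...
    (hgτ : gE.map (fun x => τ x) ∈
      {A : Matrix (Fin (n+1)) (Fin (n+1)) ℂ |
        Aᴴ * HE.map (fun x => τ x) * A = HE.map (fun x => τ x) ∧ A.det = 1})
    -- ... and SU(^τH) is compact
    (hcpt : IsCompact {A : Matrix (Fin (n+1)) (Fin (n+1)) ℂ |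
        Aᴴ * HE.map (fun x => τ x) * A = HE.map (fun x => τ x) ∧ A.det = 1}) :
    False := by
  set S := {A : Matrix (Fin (n+1)) (Fin (n+1)) ℂ |
        Aᴴ * HE.map (fun x => τ x) * A = HE.map (fun x => τ x) ∧ A.det = 1} with hS
  -- powers stay in S
  have hpow : ∀ m : ℕ, 1 ≤ m → (gE.map (fun x => τ x)) ^ m ∈ S := by
    intro m hm
    induction m with
    | zero => omega
    | succ m ih =>
      rcases Nat.eq_or_lt_of_le hm with h1 | h1
      · simpa [← h1] using hgτ
      · have hm' : 1 ≤ m := by omega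
        have hmem := ih hm'
        constructor
        · have : ((gE.map (fun x => τ x)) ^ m * gE.map (fun x => τ x))ᴴ *
              HE.map (fun x => τ x) * ((gE.map (fun x => τ x)) ^ m * gE.map (fun x => τ x))
              = HE.map (fun x => τ x) := by
            rw [conjTranspose_mul]
            calc (gE.map (fun x => τ x))ᴴ * ((gE.map (fun x => τ x)) ^ m)ᴴ *
                HE.map (fun x => τ x) * ((gE.map (fun x => τ x)) ^ m * gE.map (fun x => τ x))
                = (gE.map (fun x => τ x))ᴴ *
                  (((gE.map (fun x => τ x)) ^ m)ᴴ * HE.map (fun x => τ x) *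
                    (gE.map (fun x => τ x)) ^ m) * gE.map (fun x => τ x) := by
                  noncomm_ring
              _ = (gE.map (fun x => τ x))ᴴ * HE.map (fun x => τ x) * gE.map (fun x => τ x) := by
                  rw [hmem.1]
              _ = HE.map (fun x => τ x) := hgτ.1
          simpa [pow_succ] using this
        · rw [pow_succ, det_mul, hmem.2, hgτ.2, one_mul]
  -- trace is bounded on S
  have hcont : Continuous (Matrix.trace : Matrix (Fin (n+1)) (Fin (n+1)) ℂ → ℂ) :=
    continuous_id.matrix_trace
  obtain ⟨C, hC⟩ := (hcpt.image hcont).isBounded.exists_norm_le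
  -- trace of powers of the mapped matrix
  have hmap : ∀ m : ℕ, ((gE.map (fun x => τ x)) ^ m).trace = τ ((gE ^ m).trace) := by
    intro m
    have h1 : (gE.map (fun x => τ x)) ^ m = (gE ^ m).map (fun x => τ x) := by
      have := map_pow (τ.mapMatrix) gE m
      simpa [RingHom.mapMatrix_apply] using this.symm
    rw [h1]
    simp [Matrix.trace, Matrix.diag, map_sum]
  -- so Tr(g^m) is bounded
  have hbdd : ∀ m : ℕ, 1 ≤ m → ‖(g ^ m).trace‖ ≤ C := by
    intro m hm
    have := hC _ ⟨_, hpow m hm, rfl⟩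
    rwa [hmap, hτfix] at this
  -- but Tr(g^m) → ∞
  obtain ⟨m, hm⟩ := pow_unbounded_of_one_lt (C + 1 + k) hlam
  have hm1 : 1 ≤ m := by
    by_contra h
    interval_cases m
    simp at hm
    have hC0 : (0:ℝ) ≤ C := le_trans (norm_nonneg _) (hbdd 1 le_rfl)
    have hk : (0:ℝ) ≤ (k:ℝ) := Nat.cast_nonneg k
    linarith
  have hsum : ‖∑ j, Complex.exp ((m : ℂ) * θ j * I)‖ ≤ k := by
    calc ‖∑ j, Complex.exp ((m : ℂ) * θ j * I)‖
        ≤ ∑ j, ‖Complex.exp ((m : ℂ) * θ j * I)‖ := by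
          exact norm_sum_le _ _
      _ ≤ ∑ _j : Fin k, (1:ℝ) := by
          apply Finset.sum_le_sum
          intro j _
          rw [Complex.norm_exp]
          simp
      _ = k := by simp
  have hinv : ‖((starRingEnd ℂ) lam)⁻¹ ^ m‖ ≤ 1 := by
    rw [norm_pow, norm_inv, Complex.norm_conj]
    apply pow_le_one₀ (by positivity)
    rw [inv_le_one₀ (by linarith)]
    linarith
  have hlow : ‖lam‖ ^ m - 1 - k ≤ ‖(g ^ m).trace‖ := by
    rw [htr m]
    have h1 : ‖lam ^ m‖ ≤
        ‖lam ^ m + ((starRingEnd ℂ) lam)⁻¹ ^ m + ∑ j, Complex.exp ((m : ℂ) * θ j * I)‖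
          + ‖((starRingEnd ℂ) lam)⁻¹ ^ m‖
          + ‖∑ j, Complex.exp ((m : ℂ) * θ j * I)‖ := by
      have := norm_sub_le (lam ^ m + ((starRingEnd ℂ) lam)⁻¹ ^ m +
        ∑ j, Complex.exp ((m : ℂ) * θ j * I)) (((starRingEnd ℂ) lam)⁻¹ ^ m +
        ∑ j, Complex.exp ((m : ℂ) * θ j * I))
      calc ‖lam ^ m‖
          = ‖(lam ^ m + ((starRingEnd ℂ) lam)⁻¹ ^ m +
              ∑ j, Complex.exp ((m : ℂ) * θ j * I)) - (((starRingEnd ℂ) lam)⁻¹ ^ m +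
              ∑ j, Complex.exp ((m : ℂ) * θ j * I))‖ := by congr 1; ring
        _ ≤ _ := by
            calc _ ≤ ‖lam ^ m + ((starRingEnd ℂ) lam)⁻¹ ^ m +
                  ∑ j, Complex.exp ((m : ℂ) * θ j * I)‖ +
                  ‖((starRingEnd ℂ) lam)⁻¹ ^ m +
                  ∑ j, Complex.exp ((m : ℂ) * θ j * I)‖ := norm_sub_le _ _
              _ ≤ _ := by
                  have := norm_add_le (((starRingEnd ℂ) lam)⁻¹ ^ m)
                    (∑ j, Complex.exp ((m : ℂ) * θ j * I))
                  linarith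
    rw [norm_pow] at h1
    linarith
  have := hbdd m hm1
  linarith
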